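/- Let ι be a nonempty finite index type and for each i ∈ ι let (S i, A i, P i, J i, γ) be a finite MDP with common discount factor γ ∈ [0,1). Let π_i : S i → A i be a stationary deterministic policy for the i-th sub-MDP with value function V_i^{π_i} (the unique fixed point of the local policy-evaluation operator). Define the product policy π on the product MDP by (π s) i = π_i (s i). Then the value function V^π of π in the product MDP satisfies V^π(s) = ∑_{i ∈ ι} V_i^{π_i}(s i) for all s ∈ ∏ i, S i. -/
import Mathlib


/-- The value function of a product policy in a product MDP is the sum of the
value functions of the local policies in the sub-MDPs. -/
theorem product_policy_value_eq_sum
    {ι : Type*} [Fintype ι] [DecidableEq ι] [Nonempty ι]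
    (S A : ι → Type*)
    [∀ i, Fintype (S i)] [∀ i, Nonempty (S i)]
    [∀ i, Fintype (A i)] [∀ i, Nonempty (A i)]
    (P : ∀ i, S i → A i → S i → ℝ)
    (hP0 : ∀ i, ∀ (x : S i) (b : A i) (y : S i), 0 ≤ P i x b y)
    (hP1 : ∀ i, ∀ (x : S i) (b : A i), ∑ y : S i, P i x b y = 1)
    (J : ∀ i, S i → A i → ℝ)
    (γ : ℝ) (hγ0 : 0 ≤ γ) (hγ1 : γ < 1)
    -- local stationary deterministic policies:
    (π : ∀ i, S i → A i)
    -- `Viπ i` is the (unique) fixed point of the `i`-th local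
    -- policy-evaluation operator, i.e. the value function of `π i`:
    (Viπ : ∀ i, S i → ℝ)
    (hViπ : ∀ i, ∀ x : S i,
      Viπ i x = J i x (π i x) + γ * ∑ y : S i, P i x (π i x) y * Viπ i y)
    -- `Vπ` is the (unique) fixed point of the policy-evaluation operator of
    -- the product policy `(π s) i = π i (s i)` in the product MDP:
    (Vπ : (∀ i, S i) → ℝ)
    (hVπ : ∀ s : ∀ i, S i,
      Vπ s = (∑ i, J i (s i) (π i (s i))) +
        γ * ∑ s' : ∀ i, S i, (∏ i, P i (s i) (π i (s i)) (s' i)) * Vπ s') :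
    ∀ s : ∀ i, S i, Vπ s = ∑ i, Viπ i (s i) := by
  classical
  set W : (∀ i, S i) → ℝ := fun s => ∑ i, Viπ i (s i) with hW
  have hprodnn : ∀ s s' : ∀ i, S i, 0 ≤ ∏ i, P i (s i) (π i (s i)) (s' i) :=
    fun s s' => Finset.prod_nonneg fun i _ => hP0 i (s i) (π i (s i)) (s' i)
  have hprod1 : ∀ s : ∀ i, S i,
      ∑ s' : ∀ i, S i, (∏ i, P i (s i) (π i (s i)) (s' i)) = 1 := by
    intro s
    rw [← Fintype.prod_sum]
    simp [hP1]
  -- W satisfies the same fixed-point equation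
  have hW_fix : ∀ s : ∀ i, S i, W s = (∑ i, J i (s i) (π i (s i))) +
      γ * ∑ s' : ∀ i, S i, (∏ i, P i (s i) (π i (s i)) (s' i)) * W s' := by
    intro s
    have key : ∀ j, ∑ s' : ∀ i, S i, (∏ i, P i (s i) (π i (s i)) (s' i)) * Viπ j (s' j)
        = ∑ y, P j (s j) (π j (s j)) y * Viπ j y := by
      intro j
      set g : ∀ i, S i → ℝ := Function.update (fun i y => P i (s i) (π i (s i)) y) j
        (fun y => P j (s j) (π j (s j)) y * Viπ j y) with hg
      have hgj : g j = fun y => P j (s j) (π j (s j)) y * Viπ j y :=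
        Function.update_self _ _ _
      have hgi : ∀ i, i ≠ j → g i = fun y => P i (s i) (π i (s i)) y :=
        fun i hi => Function.update_of_ne hi _ _
      have h1 : ∀ s' : ∀ i, S i,
          (∏ i, P i (s i) (π i (s i)) (s' i)) * Viπ j (s' j) = ∏ i, g i (s' i) := by
        intro s'
        rw [← Finset.prod_erase_mul Finset.univ _ (Finset.mem_univ j),
            ← Finset.prod_erase_mul Finset.univ (fun i => g i (s' i)) (Finset.mem_univ j),
            hgj, mul_assoc]
        congr 1
        exact Finset.prod_congr rfl fun i hi => by
          rw [hgi i (Finset.ne_of_mem_erase hi)]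
      simp_rw [h1]
      rw [← Fintype.prod_sum,
          ← Finset.prod_erase_mul Finset.univ _ (Finset.mem_univ j), hgj]
      have hone : ∀ i ∈ Finset.univ.erase j, (∑ y, g i y) = 1 := fun i hi => by
        rw [hgi i (Finset.ne_of_mem_erase hi)]
        exact hP1 i (s i) (π i (s i))
      rw [Finset.prod_congr rfl hone, Finset.prod_const_one, one_mul]
    have hrhs : ∑ s' : ∀ i, S i, (∏ i, P i (s i) (π i (s i)) (s' i)) * W s'
        = ∑ j, ∑ y, P j (s j) (π j (s j)) y * Viπ j y := by
      simp_rw [hW, Finset.mul_sum]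
      rw [Finset.sum_comm]
      exact Finset.sum_congr rfl fun j _ => key j
    calc W s = ∑ j, (J j (s j) (π j (s j)) +
          γ * ∑ y, P j (s j) (π j (s j)) y * Viπ j y) := by
          exact Finset.sum_congr rfl fun j _ => hViπ j (s j)
      _ = (∑ j, J j (s j) (π j (s j))) +
          γ * ∑ j, ∑ y, P j (s j) (π j (s j)) y * Viπ j y := by
          rw [Finset.sum_add_distrib, Finset.mul_sum]
      _ = _ := by rw [hrhs]
  -- contraction / uniqueness argument
  set D : (∀ i, S i) → ℝ := fun s => Vπ s - W s with hD
  have hDfix : ∀ s : ∀ i, S i,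
      D s = γ * ∑ s' : ∀ i, S i, (∏ i, P i (s i) (π i (s i)) (s' i)) * D s' := by
    intro s
    have hsplit : ∑ s' : ∀ i, S i, (∏ i, P i (s i) (π i (s i)) (s' i)) * (Vπ s' - W s')
        = (∑ s' : ∀ i, S i, (∏ i, P i (s i) (π i (s i)) (s' i)) * Vπ s')
          - ∑ s' : ∀ i, S i, (∏ i, P i (s i) (π i (s i)) (s' i)) * W s' := by
      rw [← Finset.sum_sub_distrib]
      exact Finset.sum_congr rfl fun _ _ => mul_sub _ _ _
    simp only [hD]
    rw [hsplit, hVπ s, hW_fix s]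
    ring
  obtain ⟨s0, hs0⟩ := Finite.exists_max (fun s : ∀ i, S i => |D s|)
  have h0 : |D s0| ≤ γ * |D s0| := by
    calc |D s0| = γ * |∑ s' : ∀ i, S i, (∏ i, P i (s0 i) (π i (s0 i)) (s' i)) * D s'| := by
          rw [hDfix s0, abs_mul, abs_of_nonneg hγ0]
      _ ≤ γ * ∑ s' : ∀ i, S i, (∏ i, P i (s0 i) (π i (s0 i)) (s' i)) * |D s'| := by
          apply mul_le_mul_of_nonneg_left _ hγ0
          refine (Finset.abs_sum_le_sum_abs _ _).trans ?_
          refine Finset.sum_le_sum fun s' _ => ?_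
          rw [abs_mul, abs_of_nonneg (hprodnn s0 s')]
      _ ≤ γ * ∑ s' : ∀ i, S i, (∏ i, P i (s0 i) (π i (s0 i)) (s' i)) * |D s0| := by
          apply mul_le_mul_of_nonneg_left _ hγ0
          exact Finset.sum_le_sum fun s' _ =>
            mul_le_mul_of_nonneg_left (hs0 s') (hprodnn s0 s')
      _ = γ * |D s0| := by rw [← Finset.sum_mul, hprod1, one_mul]
  have habs : |D s0| = 0 := by nlinarith [abs_nonneg (D s0)]
  intro s
  have hle : |D s| ≤ 0 := habs ▸ hs0 s
  have : D s = 0 := abs_eq_zero.mp (le_antisymm hle (abs_nonneg _))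
  have := sub_eq_zero.mp this
  simpa [hW] using this
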